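/- Let I ⊆ (0,∞) be an open interval and h : I → ℝ a differentiable function satisfying z(h'(z) − h(z)² + 1) + 5h(z) = 0 and z·h(z) − 1 ≠ 0 on I. Then the function π(z) := 1/(z·h(z) − 1) satisfies z·π'(z) − (3+z²)·π(z)² − 2π(z) + 1 = 0 on I. -/

import Mathlib

noncomputable section

/-- If the relativistic specific enthalpy `h` satisfies `z(h' − h² + 1) + 5h = 0` and
`zh(z) − 1 ≠ 0` on an open interval `I ⊆ (0,∞)`, then `π(z) = 1/(zh(z) − 1)` satisfies
`zπ' − (3+z²)π² − 2π + 1 = 0` on `I`. -/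
theorem synge_pi_ode
    (I : Set ℝ) (hIopen : IsOpen I) (hIconn : I.OrdConnected)
    (hIpos : I ⊆ Set.Ioi (0 : ℝ))
    (h : ℝ → ℝ)
    (hdiff : ∀ z ∈ I, DifferentiableAt ℝ h z)
    (hne : ∀ z ∈ I, z * h z - 1 ≠ 0)
    (hode : ∀ z ∈ I, z * (deriv h z - h z ^ 2 + 1) + 5 * h z = 0) :
    ∀ z ∈ I,
      z * deriv (fun t => 1 / (t * h t - 1)) z
        - (3 + z ^ 2) * (1 / (z * h z - 1)) ^ 2 - 2 * (1 / (z * h z - 1)) + 1 = 0 := by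
  intro z hz
  have hzpos : (0:ℝ) < z := hIpos hz
  have hD := hdiff z hz
  have hne' := hne z hz
  have hf : HasDerivAt (fun t => t * h t - 1) (1 * h z + z * deriv h z) z :=
    ((hasDerivAt_id z).mul hD.hasDerivAt).sub_const 1
  have hinv : HasDerivAt (fun t => 1 / (t * h t - 1))
      (-(1 * h z + z * deriv h z) / (z * h z - 1) ^ 2) z := by
    simpa [one_div, Pi.inv_def] using hf.inv hne'
  rw [hinv.deriv]
  have hode' := hode z hz
  have h2 : (z * h z - 1) ^ 2 ≠ 0 := pow_ne_zero 2 hne'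
  field_simp
  linear_combination (-z) * hode'
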